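/- (Lower bound of the main theorem) Suppose $\mathcal{G}$ forbids a monochromatic chain of every color and $\overline{\beta}$ are positive weights. Then the total weight of validly colored subsets of $\mathcal{P}([n])$ satisfies $\mu(\overline{\beta}, \Lambda(\mathcal{G},n)) \geq e^{(1 - O(1/n))\,\omega_{crit}(\overline{\beta})\binom{n}{\lfloor n/2\rfloor}}$. -/

import Mathlib

open Finset

/-- `𝒢` forbids a monochromatic chain of every color. -/
def Sparse (m : ℕ) (G : Set (List (Fin m))) : Prop :=
  ∀ i : Fin m, ∃ k, 1 ≤ k ∧ List.replicate k i ∈ G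

/-- A valid template supported on a chain poset (modeled as `ℕ`). -/
def ValidChainTemplate {m : ℕ} (G : Set (List (Fin m))) (t : ℕ → Finset (Fin m)) : Prop :=
  {j | t j ≠ ∅}.Finite ∧
    ∀ c : ℕ → Fin m, (∀ j, t j ≠ ∅ → c j ∈ t j) →
      ¬ ∃ l : List ℕ, l.Chain' (· < ·) ∧ (∀ j ∈ l, t j ≠ ∅) ∧ l.map c ∈ G

noncomputable def omegaChain {m : ℕ} (β : Fin m → ℝ) (t : ℕ → Finset (Fin m)) : ℝ :=
  ∑ᶠ j : ℕ, Real.log (1 + ∑ i ∈ t j, β i)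

noncomputable def omegaCrit {m : ℕ} (β : Fin m → ℝ) (G : Set (List (Fin m))) : ℝ :=
  sSup {w | ∃ t, ValidChainTemplate G t ∧ w = omegaChain β t}

noncomputable def Flog {m : ℕ} (β : Fin m → ℝ) (S : Finset (Fin m)) : ℝ :=
  Real.log (1 + ∑ i ∈ S, β i)

lemma Flog_empty {m : ℕ} (β : Fin m → ℝ) : Flog β ∅ = 0 := by simp [Flog]

lemma Flog_nonneg {m : ℕ} {β : Fin m → ℝ} (hβ : ∀ i, 0 < β i) (S : Finset (Fin m)) :
    0 ≤ Flog β S := by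
  apply Real.log_nonneg
  have : (0:ℝ) ≤ ∑ i ∈ S, β i := Finset.sum_nonneg fun i _ => (hβ i).le
  linarith

lemma omegaChain_eq_sum {m : ℕ} (β : Fin m → ℝ) (t : ℕ → Finset (Fin m))
    (J : Finset ℕ) (hJ : ∀ j, t j ≠ ∅ → j ∈ J) :
    omegaChain β t = ∑ j ∈ J, Flog β (t j) := by
  apply finsum_eq_sum_of_support_subset
  intro j hj
  simp only [Function.mem_support] at hj
  by_contra hje
  have : t j = ∅ := by
    by_contra h
    exact hje (hJ j h)
  rw [this] at hj
  simp at hj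

/-- reindex a sum over a finset of naturals via its order iso with `Fin card`. -/
lemma sum_orderIso {J : Finset ℕ} {F : ℕ → ℝ} :
    ∑ j ∈ J, F j = ∑ r : Fin J.card, F (J.orderIsoOfFin rfl r) := by
  rw [← Finset.sum_coe_sort J F]
  exact (Fintype.sum_equiv (J.orderIsoOfFin rfl).toEquiv _ _ (fun r => rfl)).symm

lemma sum_fin_extend {s K : ℕ} (h : s ≤ K) (f : ℕ → ℝ) :
    ∑ r : Fin s, f r = ∑ r : Fin K, (if (r : ℕ) < s then f r else 0) := by
  rw [Fin.sum_univ_eq_sum_range (fun r => f r) s,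
    Fin.sum_univ_eq_sum_range (fun r => if r < s then f r else 0) K]
  rw [← Finset.sum_subset (Finset.range_subset_range.2 h)
      (fun r _ hr => if_neg (fun h2 => hr (Finset.mem_range.2 h2)))]
  exact Finset.sum_congr rfl (fun r hr => (if_pos (Finset.mem_range.1 hr)).symm)

open scoped Classical in
lemma omegaCrit_attained {m : ℕ} (β : Fin m → ℝ) {G : Set (List (Fin m))}
    (hG2 : ∀ l ∈ G, 2 ≤ l.length)
    (k : Fin m → ℕ) (hkG : ∀ i, List.replicate (k i) i ∈ G)
    (hcard : ∀ t, ValidChainTemplate G t → ∀ J : Finset ℕ, (∀ j ∈ J, t j ≠ ∅) →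
      J.card ≤ ∑ i, k i) :
    0 ≤ omegaCrit β G ∧
      ∃ t, ValidChainTemplate G t ∧ omegaCrit β G = omegaChain β t := by
  classical
  set S := {w | ∃ t, ValidChainTemplate G t ∧ w = omegaChain β t} with hS
  have hzero : (0:ℝ) ∈ S := by
    refine ⟨fun _ => ∅, ⟨?_, ?_⟩, ?_⟩
    · simp
    · rintro c hc ⟨l, h1, h2, h3⟩
      have hl : l = [] := by
        rw [List.eq_nil_iff_forall_not_mem]
        intro j hj
        exact h2 j hj rfl
      subst hl
      have := hG2 _ h3
      simp at this
    · rw [omegaChain_eq_sum β _ (∅ : Finset ℕ) (by simp)]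
      simp
  have hfin : S.Finite := by
    set K := ∑ i, k i with hK
    set Φ : (Fin K → Finset (Fin m)) → ℝ := fun g => ∑ r, Flog β (g r) with hΦ
    apply Set.Finite.subset (Set.finite_range Φ)
    rintro w ⟨t, ht, rfl⟩
    set J := ht.1.toFinset with hJ
    have hJmem : ∀ j, j ∈ J ↔ t j ≠ ∅ := fun j => ht.1.mem_toFinset
    have hs : J.card ≤ K := hcard t ht J (fun j hj => (hJmem j).1 hj)
    set σ := J.orderIsoOfFin rfl with hσ
    set f : ℕ → ℝ := fun j => if h : j < J.card then Flog β (t (σ ⟨j, h⟩)) else 0 with hf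
    set g : Fin K → Finset (Fin m) :=
      fun r => if h : (r:ℕ) < J.card then t (σ ⟨r, h⟩) else ∅ with hg
    refine ⟨g, ?_⟩
    have e1 : Φ g = ∑ r : Fin K, (if (r:ℕ) < J.card then f r else 0) := by
      apply Finset.sum_congr rfl
      intro r _
      by_cases h : (r:ℕ) < J.card
      · simp only [hΦ, hg, hf, dif_pos h, if_pos h]
      · simp only [hΦ, hg, hf, dif_neg h, if_neg h, Flog_empty]
    rw [e1, ← sum_fin_extend hs f]
    rw [omegaChain_eq_sum β t J (fun j hj => (hJmem j).2 hj), sum_orderIso]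
    apply Finset.sum_congr rfl
    intro r _
    simp only [hf, dif_pos r.isLt]
    rfl
  have hmem : omegaCrit β G ∈ S := Set.Nonempty.csSup_mem ⟨0, hzero⟩ hfin
  exact ⟨le_csSup hfin.bddAbove hzero, hmem⟩

open scoped Classical in
lemma support_card_le {m : ℕ} {G : Set (List (Fin m))} {t : ℕ → Finset (Fin m)}
    (ht : ValidChainTemplate G t) (k : Fin m → ℕ) (hkG : ∀ i, List.replicate (k i) i ∈ G)
    (J : Finset ℕ) (hJ : ∀ j ∈ J, t j ≠ ∅) : J.card ≤ ∑ i, k i := by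
  by_contra hcon
  push_neg at hcon
  -- J is nonempty, giving an inhabitant of Fin m
  have hJne : J.Nonempty := by
    rw [← Finset.card_pos]; omega
  obtain ⟨j0, hj0⟩ := hJne
  have h0 : (t j0).Nonempty := Finset.nonempty_iff_ne_empty.2 (hJ j0 hj0)
  obtain ⟨i0, _⟩ := h0
  set c : ℕ → Fin m := fun j => if hj : (t j).Nonempty then hj.choose else i0 with hc
  have hcmem : ∀ j, t j ≠ ∅ → c j ∈ t j := by
    intro j hj
    have hne : (t j).Nonempty := Finset.nonempty_iff_ne_empty.2 hj
    simp only [hc, dif_pos hne]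
    exact hne.choose_spec
  -- pigeonhole
  have hsum : ∑ i : Fin m, (J.filter (fun j => c j = i)).card = J.card :=
    (Finset.card_eq_sum_card_fiberwise (fun j _ => Finset.mem_univ (c j))).symm
  have hex : ∃ i : Fin m, k i < (J.filter (fun j => c j = i)).card := by
    by_contra hno
    push_neg at hno
    have := Finset.sum_le_sum (fun i (_ : i ∈ Finset.univ) => hno i)
    omega
  obtain ⟨i, hi⟩ := hex
  obtain ⟨E, hEsub, hEcard⟩ := Finset.exists_subset_card_eq hi.le
  set l := E.sort (· ≤ ·) with hl
  refine ht.2 c hcmem ⟨l, ?_, ?_, ?_⟩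
  · exact List.sortedLT_iff_isChain.1 E.sortedLT_sort
  · intro j hj
    exact hJ j (Finset.filter_subset _ _ (hEsub (Finset.mem_sort (· ≤ ·) |>.1 hj)))
  · have : l.map c = List.replicate (k i) i := by
      rw [List.eq_replicate_iff]
      constructor
      · rw [List.length_map, Finset.length_sort, hEcard]
      · intro b hb
        obtain ⟨j, hjl, rfl⟩ := List.mem_map.1 hb
        have := hEsub (Finset.mem_sort (· ≤ ·) |>.1 hjl)
        exact (Finset.mem_filter.1 this).2
    rw [this]; exact hkG i

lemma choose_middle_lower (s n r : ℕ) (hn : 4*s+4 ≤ n) (hr : r ≤ s) :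
    (1 - (s*(4*s+4):ℝ)/n) * (n.choose (n/2)) ≤ (n.choose (n/2 - r)) := by
  have hn0 : 0 < n := by omega
  have hN : (0:ℝ) < n := by exact_mod_cast hn0
  set a : ℝ := (4*s+4:ℝ)/n with ha
  have haN : a * n = 4*s+4 := by rw [ha]; field_simp
  have ha0 : 0 ≤ a := by positivity
  have ha1 : a ≤ 1 := by
    rw [div_le_one hN]
    exact_mod_cast hn
  set h := n / 2 with hh
  have hhn : h ≤ n := Nat.div_le_self _ _
  have hhs : 2*s+2 ≤ h := by
    have := Nat.div_le_div_right (c := 2) hn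
    omega
  have h2h : 2*h ≤ n ∧ n ≤ 2*h+1 := by omega
  -- key induction
  have key : ∀ r, r ≤ s → ((1-a)^r : ℝ) * (n.choose h) ≤ n.choose (h - r) := by
    intro r hr
    induction r with
    | zero => simp
    | succ r ih =>
      have hr' : r ≤ s := by omega
      have ihr := ih hr'
      have hid : n.choose (h - r) * (h - r) = n.choose (h - (r+1)) * (n - h + r + 1) := by
        have := Nat.choose_succ_right_eq n (h - r - 1)
        have e1 : h - r - 1 + 1 = h - r := by omega
        have e2 : n - (h - r - 1) = n - h + r + 1 := by omega
        rw [e1, e2] at this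
        have e3 : h - (r+1) = h - r - 1 := by omega
        rw [e3]
        exact this
      -- cast to ℝ
      have hcast : (n.choose (h - r) : ℝ) * ((h:ℝ) - r) =
          (n.choose (h - (r+1)) : ℝ) * ((n:ℝ) - h + r + 1) := by
        have e1 : ((h - r : ℕ) : ℝ) = (h:ℝ) - r := by
          have : r ≤ h := by omega
          push_cast [this]; ring
        have e2 : ((n - h + r + 1 : ℕ) : ℝ) = (n:ℝ) - h + r + 1 := by
          have : h ≤ n := hhn
          push_cast [this]; ring
        calc (n.choose (h - r) : ℝ) * ((h:ℝ) - r)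
            = ((n.choose (h - r) * (h - r) : ℕ) : ℝ) := by rw [Nat.cast_mul, e1]
          _ = ((n.choose (h - (r+1)) * (n - h + r + 1) : ℕ) : ℝ) := by rw [hid]
          _ = _ := by rw [Nat.cast_mul, e2]
      have hden : (0:ℝ) < (n:ℝ) - h + r + 1 := by
        have : (h:ℝ) ≤ n := by exact_mod_cast hhn
        linarith
      have hkey : (1-a) * ((n:ℝ) - h + r + 1) ≤ (h:ℝ) - r := by
        have hH2 : 2*(h:ℝ) ≤ n := by exact_mod_cast h2h.1
        have hH2' : (n:ℝ) ≤ 2*h+1 := by exact_mod_cast h2h.2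
        have hrs : (r:ℝ) ≤ s := by exact_mod_cast hr'
        have hs0 : (0:ℝ) ≤ s := by positivity
        -- a * (n - h + r + 1) ≥ a * (n/2) = (2s+2)
        have h1 : a * ((n:ℝ) - h + r + 1) ≥ a * ((n:ℝ)/2) := by
          apply mul_le_mul_of_nonneg_left _ ha0
          linarith
        have h2 : a * ((n:ℝ)/2) = 2*s+2 := by
          field_simp at haN ⊢
          linarith
        nlinarith
      have hC : (0:ℝ) ≤ (n.choose (h - r) : ℝ) := by positivity
      have step : (1-a) * (n.choose (h - r) : ℝ) ≤ n.choose (h - (r+1)) := by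
        rw [← mul_le_mul_iff_of_pos_right hden]
        calc (1-a) * (n.choose (h - r) : ℝ) * ((n:ℝ) - h + r + 1)
            = (n.choose (h - r) : ℝ) * ((1-a) * ((n:ℝ) - h + r + 1)) := by ring
          _ ≤ (n.choose (h - r) : ℝ) * ((h:ℝ) - r) := by
              apply mul_le_mul_of_nonneg_left hkey hC
          _ = (n.choose (h - (r+1)) : ℝ) * ((n:ℝ) - h + r + 1) := hcast
      calc ((1-a)^(r+1) : ℝ) * (n.choose h)
          = (1-a) * ((1-a)^r * (n.choose h)) := by ring
        _ ≤ (1-a) * (n.choose (h - r)) := by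
            apply mul_le_mul_of_nonneg_left ihr (by linarith)
        _ ≤ _ := step
  have hber : (1 - (s*(4*s+4):ℝ)/n) ≤ (1-a)^r := by
    have h1 : (1:ℝ) + s*(-a) ≤ (1 + (-a))^s := one_add_mul_le_pow (by linarith) s
    have h2 : ((1-a):ℝ)^s ≤ (1-a)^r := pow_le_pow_of_le_one (by linarith) (by linarith) hr
    have e : (s*(4*s+4):ℝ)/n = (s:ℝ)*a := by rw [ha]; ring
    rw [e]
    calc (1:ℝ) - s*a = 1 + s*(-a) := by ring
      _ ≤ (1 + (-a))^s := h1
      _ = (1-a)^s := by ring_nf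
      _ ≤ (1-a)^r := h2
  calc (1 - (s*(4*s+4):ℝ)/n) * (n.choose h)
      ≤ (1-a)^r * (n.choose h) := by
        apply mul_le_mul_of_nonneg_right hber (by positivity)
    _ ≤ _ := key r hr

open scoped Classical in
lemma construction {m : ℕ} (β : Fin m → ℝ) (hβ : ∀ i, 0 < β i)
    {G : Set (List (Fin m))} (hG2 : ∀ l ∈ G, 2 ≤ l.length)
    {t : ℕ → Finset (Fin m)} (ht : ValidChainTemplate G t)
    (J : Finset ℕ) (hJmem : ∀ j, j ∈ J ↔ t j ≠ ∅)
    (n : ℕ) (hn : 4 * J.card + 4 ≤ n) :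
    Real.exp ((1 - ((J.card * (4*J.card+4) : ℕ) : ℝ)/n) * omegaChain β t * (n.choose (n/2))) ≤
      ∑ f ∈ Finset.univ.filter (fun f : Finset (Fin n) → Option (Fin m) =>
            ¬ ∃ l : List (Finset (Fin n) × Fin m), (l.map Prod.fst).Chain' (· ⊂ ·) ∧
              (∀ q ∈ l, f q.1 = some q.2) ∧ l.map Prod.snd ∈ G),
          ∏ x : Finset (Fin n), (f x).elim 1 β := by
  classical
  set s := J.card with hs
  set σ := J.orderIsoOfFin rfl with hσ
  set h := n / 2 with hh
  set b := h + 1 - s with hb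
  have hhn : h ≤ n := Nat.div_le_self _ _
  have hhs : 2*s+2 ≤ h := by
    have := Nat.div_le_div_right (c := 2) hn
    omega
  -- the slot assignment
  set slot : ℕ → Finset (Fin m) :=
    (fun d => if hd : d - b < s ∧ b ≤ d ∧ d ≤ h then t (σ ⟨d - b, hd.1⟩) else ∅) with hslot
  set T : Finset (Fin n) → Finset (Fin m) := fun x => slot x.card with hT
  set O : Finset (Fin n) → Finset (Option (Fin m)) :=
    (fun x => insert none ((T x).image some)) with hO
  -- Step A : validity of every coloring in the family
  have stepA : ∀ f ∈ Fintype.piFinset O,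
      ¬ ∃ l : List (Finset (Fin n) × Fin m), (l.map Prod.fst).Chain' (· ⊂ ·) ∧
        (∀ q ∈ l, f q.1 = some q.2) ∧ l.map Prod.snd ∈ G := by
    intro f hf ⟨l, hch, hcol, hGl⟩
    rw [Fintype.mem_piFinset] at hf
    have hlne : l ≠ [] := by
      intro hnil
      have := hG2 _ hGl
      rw [hnil] at this
      simp at this
    obtain ⟨q0, hq0⟩ := List.exists_mem_of_ne_nil l hlne
    set i0 := q0.2 with hi0
    have hq : ∀ q ∈ l, q.2 ∈ T q.1 := by
      intro q hq
      have h1 := hcol q hq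
      have h2 := hf q.1
      rw [h1, hO] at h2
      simp only [Finset.mem_insert, Finset.mem_image] at h2
      rcases h2 with h2 | ⟨i, hi, hie⟩
      · exact absurd h2 (by simp)
      · rwa [← Option.some_inj.1 hie]
    have hrange : ∀ q ∈ l, ∃ hd : q.1.card - b < s,
        b ≤ q.1.card ∧ q.1.card ≤ h ∧ q.2 ∈ t (σ ⟨q.1.card - b, hd⟩) := by
      intro q hql
      have := hq q hql
      simp only [hT, hslot] at this
      by_cases hd : q.1.card - b < s ∧ b ≤ q.1.card ∧ q.1.card ≤ h
      · rw [dif_pos hd] at this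
        exact ⟨hd.1, hd.2.1, hd.2.2, this⟩
      · rw [dif_neg hd] at this
        simp at this
    set D : Finset (Fin n) → ℕ :=
      (fun x => if hx : x.card - b < s then (σ ⟨x.card - b, hx⟩ : ℕ) else 0) with hD
    have hDval : ∀ q ∈ l, ∃ hd : q.1.card - b < s,
        D q.1 = (σ ⟨q.1.card - b, hd⟩ : ℕ) := by
      intro q hql
      obtain ⟨hd, _, _, _⟩ := hrange q hql
      exact ⟨hd, by rw [hD]; simp only [dif_pos hd]⟩
    have hDJ : ∀ q ∈ l, D q.1 ∈ J := by
      intro q hql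
      obtain ⟨hd, hDeq⟩ := hDval q hql
      rw [hDeq]
      exact (σ ⟨q.1.card - b, hd⟩).2
    have hpair : l.Pairwise (fun q q' => q.1 ⊂ q'.1) := by
      have := (List.isChain_iff_pairwise).1 hch
      exact (List.pairwise_map.1 this)
    -- cards determine everything
    have hDcard : ∀ q ∈ l, ∀ q' ∈ l, D q.1 = D q'.1 → q.1.card = q'.1.card := by
      intro q hql q' hql' hDeq
      obtain ⟨hd, he⟩ := hDval q hql
      obtain ⟨hd', he'⟩ := hDval q' hql'
      rw [he, he'] at hDeq
      have := σ.injective (Subtype.coe_injective hDeq)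
      have h2 : q.1.card - b = q'.1.card - b := by
        simpa using congrArg Fin.val this
      obtain ⟨_, hb1, _, _⟩ := hrange q hql
      obtain ⟨_, hb1', _, _⟩ := hrange q' hql'
      omega
    -- the template coloring
    set c : ℕ → Fin m := (fun j =>
      if hj : ∃ q, q ∈ l ∧ D q.1 = j then (Exists.choose hj).2
      else if hne : (t j).Nonempty then hne.choose else i0) with hc
    have hcmem : ∀ j, t j ≠ ∅ → c j ∈ t j := by
      intro j hj
      simp only [hc]
      by_cases hex : ∃ q, q ∈ l ∧ D q.1 = j
      · rw [dif_pos hex]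
        obtain ⟨hql', hDeq⟩ := hex.choose_spec
        obtain ⟨hd, hbl, hbu, hmem⟩ := hrange _ hql'
        obtain ⟨hd2, he2⟩ := hDval _ hql'
        rw [he2] at hDeq
        convert hmem using 2
        exact hDeq.symm
      · rw [dif_neg hex]
        have hne : (t j).Nonempty := Finset.nonempty_iff_ne_empty.2 hj
        rw [dif_pos hne]
        exact hne.choose_spec
    have hkey : ∀ q ∈ l, c (D q.1) = q.2 := by
      intro q hql
      have hex : ∃ q', q' ∈ l ∧ D q'.1 = D q.1 := ⟨q, hql, rfl⟩
      simp only [hc]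
      rw [dif_pos hex]
      obtain ⟨hql', hDeq⟩ := hex.choose_spec
      set q' := hex.choose with hq'
      -- q'.1 = q.1
      have hcards : q'.1.card = q.1.card := hDcard q' hql' q hql hDeq
      have hfst : q'.1 = q.1 := by
        by_cases hqq : q' = q
        · rw [hqq]
        · have hR : l.Pairwise (fun a b => a.1 ⊂ b.1 ∨ b.1 ⊂ a.1) :=
            hpair.imp (fun hab => Or.inl hab)
          letI : Std.Symm (fun a b : Finset (Fin n) × Fin m => a.1 ⊂ b.1 ∨ b.1 ⊂ a.1) :=
            ⟨fun a b hab => hab.symm.imp id id⟩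
          have := hR.forall hql' hql hqq
          rcases this with hsub | hsub
          · exact absurd hcards (Finset.card_lt_card hsub).ne
          · exact absurd hcards.symm (Finset.card_lt_card hsub).ne
      have := hcol q' hql'
      rw [hfst, hcol q hql] at this
      exact Option.some_inj.1 this.symm
    -- apply validity of the template
    refine ht.2 c hcmem ⟨l.map (fun q => D q.1), ?_, ?_, ?_⟩
    · show List.IsChain _ _
      rw [List.isChain_map]
      apply List.Pairwise.isChain
      apply List.Pairwise.imp_of_mem _ hpair
      intro q q' hql hql' hsub
      obtain ⟨hd, he⟩ := hDval q hql
      obtain ⟨hd', he'⟩ := hDval q' hql'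
      obtain ⟨_, hb1, _, _⟩ := hrange q hql
      obtain ⟨_, hb1', _, _⟩ := hrange q' hql'
      have hcards : q.1.card < q'.1.card := Finset.card_lt_card hsub
      rw [he, he']
      have hlt : (⟨q.1.card - b, hd⟩ : Fin s) < ⟨q'.1.card - b, hd'⟩ := by
        simp only [Fin.mk_lt_mk]
        omega
      exact_mod_cast σ.strictMono hlt
    · intro j hjl
      obtain ⟨q, hql, rfl⟩ := List.mem_map.1 hjl
      exact (hJmem _).1 (hDJ q hql)
    · rw [List.map_map]
      have : l.map ((fun j => c j) ∘ fun q => D q.1) = l.map Prod.snd := by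
        apply List.map_congr_left
        intro q hql
        exact hkey q hql
      rw [this]
      exact hGl
  -- Step B : counting
  set W : ℕ → ℝ := (fun d => 1 + ∑ i ∈ slot d, β i) with hW
  have hW1 : ∀ d, 1 ≤ W d := by
    intro d
    have : (0:ℝ) ≤ ∑ i ∈ slot d, β i := Finset.sum_nonneg fun i _ => (hβ i).le
    simp only [hW]
    linarith
  have hsum_O : ∀ x : Finset (Fin n), ∑ o ∈ O x, o.elim 1 β = W x.card := by
    intro x
    simp only [hO]
    rw [Finset.sum_insert (by simp), Finset.sum_image (by intro a _ c _ hac; exact Option.some_inj.1 hac)]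
    simp only [hW, hT, Option.elim]
  have hP : ∑ f ∈ Fintype.piFinset O, ∏ x : Finset (Fin n), (f x).elim 1 β
      = ∏ x : Finset (Fin n), W x.card := by
    rw [← Finset.prod_univ_sum O (fun _ o => o.elim 1 β)]
    exact Finset.prod_congr rfl (fun x _ => hsum_O x)
  have hgroup : ∏ x : Finset (Fin n), W x.card
      = ∏ d ∈ Finset.range (n+1), W d ^ (n.choose d) := by
    have hmaps : ∀ x : Finset (Fin n), x ∈ (Finset.univ : Finset (Finset (Fin n))) →
        x.card ∈ Finset.range (n+1) := by
      intro x _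
      rw [Finset.mem_range]
      have := Finset.card_le_univ x
      simp only [Finset.card_univ, Fintype.card_fin] at this
      omega
    rw [← Finset.prod_fiberwise_of_maps_to hmaps (fun x => W x.card)]
    apply Finset.prod_congr rfl
    intro d _
    have hfib : Finset.univ.filter (fun x : Finset (Fin n) => x.card = d)
        = Finset.powersetCard d (Finset.univ : Finset (Fin n)) := by
      ext x
      simp [Finset.mem_powersetCard]
    rw [Finset.prod_congr rfl (fun x hx => by
      rw [(Finset.mem_filter.1 hx).2]), Finset.prod_const, hfib,
      Finset.card_powersetCard, Finset.card_univ, Fintype.card_fin]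
  set P : ℝ := ∏ d ∈ Finset.range (n+1), W d ^ (n.choose d) with hPdef
  have hPpos : 0 < P := Finset.prod_pos fun d _ => pow_pos (lt_of_lt_of_le one_pos (hW1 d)) _
  -- the window of middle layers
  set E : Finset ℕ := (Finset.univ : Finset (Fin s)).image (fun r : Fin s => b + (r:ℕ)) with hE
  have hEsub : E ⊆ Finset.range (n+1) := by
    intro d hd
    rw [hE] at hd
    obtain ⟨r, -, rfl⟩ := Finset.mem_image.1 hd
    have hrlt : (r : ℕ) < s := r.2
    rw [Finset.mem_range]
    omega
  have hslotwin : ∀ r : Fin s, slot (b + (r:ℕ)) = t (σ r) := by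
    intro r
    have hr := r.isLt
    have hcond : (b + (r:ℕ)) - b < s ∧ b ≤ b + (r:ℕ) ∧ b + (r:ℕ) ≤ h := by omega
    simp only [hslot]
    rw [dif_pos hcond]
    have hxr : (⟨b + (r:ℕ) - b, hcond.1⟩ : Fin s) = r :=
      Fin.ext (show b + (r:ℕ) - b = (r:ℕ) by omega)
    rw [hxr]
  have hchoosewin : ∀ r : Fin s,
      (1 - ((s * (4*s+4) : ℕ) : ℝ)/n) * (n.choose h) ≤ (n.choose (b + (r:ℕ))) := by
    intro r
    have hr := r.isLt
    have := choose_middle_lower s n (s - 1 - (r:ℕ)) hn (by omega)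
    have heq : h - (s - 1 - (r:ℕ)) = b + (r:ℕ) := by omega
    rw [heq] at this
    convert this using 3
    push_cast
    ring
  have homega : omegaChain β t = ∑ r : Fin s, Flog β (t (σ r)) := by
    rw [omegaChain_eq_sum β t J (fun j hj => (hJmem j).2 hj)]
    exact sum_orderIso
  have hlog : (1 - ((s * (4*s+4) : ℕ) : ℝ)/n) * omegaChain β t * (n.choose h)
      ≤ Real.log P := by
    rw [hPdef, Real.log_prod (fun d _ => (pow_pos (lt_of_lt_of_le one_pos (hW1 d)) _).ne')]
    have hnn : ∀ d ∈ Finset.range (n+1), 0 ≤ Real.log (W d ^ (n.choose d)) := by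
      intro d _
      rw [Real.log_pow]
      exact mul_nonneg (by positivity) (Real.log_nonneg (hW1 d))
    have h1 : ∑ d ∈ E, Real.log (W d ^ (n.choose d))
        ≤ ∑ d ∈ Finset.range (n+1), Real.log (W d ^ (n.choose d)) :=
      Finset.sum_le_sum_of_subset_of_nonneg hEsub (fun d hd _ => hnn d hd)
    have h2 : ∑ d ∈ E, Real.log (W d ^ (n.choose d))
        = ∑ r : Fin s, (n.choose (b + (r:ℕ))) * Real.log (W (b + (r:ℕ))) := by
      rw [hE, Finset.sum_image (f := fun d => Real.log (W d ^ (n.choose d)))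
        (g := fun r : Fin s => b + (r:ℕ))
        (by intro a _ c _ hac
            simp only at hac
            exact Fin.ext (by omega))]
      exact Finset.sum_congr rfl
        (fun r _ => Real.log_pow _ _)
    have h3 : ∀ r : Fin s, Real.log (W (b + (r:ℕ))) = Flog β (t (σ r)) := by
      intro r
      simp only [hW, Flog]
      rw [hslotwin r]
    have h4 : (1 - ((s * (4*s+4) : ℕ) : ℝ)/n) * omegaChain β t * (n.choose h)
        = ∑ r : Fin s, ((1 - ((s * (4*s+4) : ℕ) : ℝ)/n) * (n.choose h)) * Flog β (t (σ r)) := by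
      simp only [homega, Finset.mul_sum, Finset.sum_mul]
      exact Finset.sum_congr rfl (fun r _ => by ring)
    rw [h4]
    refine le_trans (Finset.sum_le_sum (fun r _ => ?_)) (h2 ▸ h1)
    rw [h3 r]
    exact mul_le_mul_of_nonneg_right (hchoosewin r) (Flog_nonneg hβ _)
  -- final assembly
  have hsub2 : Fintype.piFinset O ⊆ Finset.univ.filter
      (fun f : Finset (Fin n) → Option (Fin m) =>
        ¬ ∃ l : List (Finset (Fin n) × Fin m), (l.map Prod.fst).Chain' (· ⊂ ·) ∧
          (∀ q ∈ l, f q.1 = some q.2) ∧ l.map Prod.snd ∈ G) := by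
    intro f hf
    rw [Finset.mem_filter]
    exact ⟨Finset.mem_univ f, stepA f hf⟩
  have hnonneg : ∀ f : Finset (Fin n) → Option (Fin m),
      0 ≤ ∏ x : Finset (Fin n), (f x).elim 1 β := by
    intro f
    apply Finset.prod_nonneg
    intro x _
    cases f x with
    | none => norm_num
    | some i => exact (hβ i).le
  calc Real.exp ((1 - ((s * (4*s+4) : ℕ) : ℝ)/n) * omegaChain β t * (n.choose h))
      ≤ Real.exp (Real.log P) := Real.exp_le_exp.2 hlog
    _ = P := Real.exp_log hPpos
    _ = ∑ f ∈ Fintype.piFinset O, ∏ x : Finset (Fin n), (f x).elim 1 β := by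
        rw [hP, hgroup]
    _ ≤ _ := Finset.sum_le_sum_of_subset_of_nonneg hsub2 (fun f _ _ => hnonneg f)


open scoped Classical in
theorem stmt16 (m : ℕ) (β : Fin m → ℝ) (hβ : ∀ i, 0 < β i)
    (G : Set (List (Fin m))) (hsp : Sparse m G) (hG2 : ∀ l ∈ G, 2 ≤ l.length) :
    ∃ Cc : ℝ, ∀ n : ℕ, 1 ≤ n →
      Real.exp ((1 - Cc / n) * omegaCrit β G * (n.choose (n / 2))) ≤
        ∑ f ∈ Finset.univ.filter (fun f : Finset (Fin n) → Option (Fin m) =>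
            ¬ ∃ l : List (Finset (Fin n) × Fin m), (l.map Prod.fst).Chain' (· ⊂ ·) ∧
              (∀ q ∈ l, f q.1 = some q.2) ∧ l.map Prod.snd ∈ G),
          ∏ x : Finset (Fin n), (f x).elim 1 β := by
  classical
  choose k hk1 hkG using hsp
  obtain ⟨hω0, t, ht, hωeq⟩ := omegaCrit_attained β hG2 k hkG
    (fun t ht J hJ => support_card_le ht k hkG J hJ)
  set J := ht.1.toFinset with hJ
  have hJmem : ∀ j, j ∈ J ↔ t j ≠ ∅ := fun j => ht.1.mem_toFinset
  set s := J.card with hs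
  refine ⟨((4*s+4)*(s+1) : ℕ), ?_⟩
  intro n hn
  have hn0 : (0:ℝ) < n := by exact_mod_cast hn
  have hnonneg : ∀ f : Finset (Fin n) → Option (Fin m),
      0 ≤ ∏ x : Finset (Fin n), (f x).elim 1 β := by
    intro f
    apply Finset.prod_nonneg
    intro x _
    cases f x with
    | none => norm_num
    | some i => exact (hβ i).le
  by_cases hbig : 4*s+4 ≤ n
  · have hcon := construction β hβ hG2 ht J hJmem n hbig
    refine le_trans (Real.exp_le_exp.2 ?_) hcon
    rw [hωeq]
    apply mul_le_mul_of_nonneg_right _ (by positivity)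
    apply mul_le_mul_of_nonneg_right _ (hωeq ▸ hω0)
    apply sub_le_sub_left
    have hCle : ((s * (4*s+4) : ℕ) : ℝ) ≤ (((4*s+4)*(s+1) : ℕ) : ℝ) := by
      have : s * (4*s+4) ≤ (4*s+4)*(s+1) := by nlinarith
      exact_mod_cast this
    gcongr
  · -- small n case
    have h1le : (1:ℝ) ≤ ∑ f ∈ Finset.univ.filter (fun f : Finset (Fin n) → Option (Fin m) =>
        ¬ ∃ l : List (Finset (Fin n) × Fin m), (l.map Prod.fst).Chain' (· ⊂ ·) ∧
          (∀ q ∈ l, f q.1 = some q.2) ∧ l.map Prod.snd ∈ G),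
        ∏ x : Finset (Fin n), (f x).elim 1 β := by
      have hmem : (fun _ : Finset (Fin n) => (none : Option (Fin m))) ∈
          Finset.univ.filter (fun f : Finset (Fin n) → Option (Fin m) =>
            ¬ ∃ l : List (Finset (Fin n) × Fin m), (l.map Prod.fst).Chain' (· ⊂ ·) ∧
              (∀ q ∈ l, f q.1 = some q.2) ∧ l.map Prod.snd ∈ G) := by
        rw [Finset.mem_filter]
        refine ⟨Finset.mem_univ _, ?_⟩
        rintro ⟨l, hch, hcol, hGl⟩
        have hlne : l ≠ [] := by
          intro hnil
          have := hG2 _ hGl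
          rw [hnil] at this
          simp at this
        obtain ⟨q0, hq0⟩ := List.exists_mem_of_ne_nil l hlne
        exact absurd (hcol q0 hq0) (by simp)
      have := Finset.single_le_sum (f := fun f : Finset (Fin n) → Option (Fin m) =>
        ∏ x : Finset (Fin n), (f x).elim 1 β) (fun f _ => hnonneg f) hmem
      simpa using this
    refine le_trans ?_ h1le
    have hexp0 : ∀ X : ℝ, X ≤ 0 → Real.exp X ≤ 1 := by
      intro X hX
      calc Real.exp X ≤ Real.exp 0 := Real.exp_le_exp.2 hX
        _ = 1 := Real.exp_zero
    apply hexp0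
    apply mul_nonpos_of_nonpos_of_nonneg _ (by positivity)
    apply mul_nonpos_of_nonpos_of_nonneg _ hω0
    have : (n:ℝ) < ((4*s+4)*(s+1) : ℕ) := by
      have h1 : n < 4*s+4 := by omega
      have h2 : 4*s+4 ≤ (4*s+4)*(s+1) := by nlinarith
      exact_mod_cast lt_of_lt_of_le h1 h2
    have : 1 < ((4*s+4)*(s+1) : ℕ) / (n:ℝ) := by
      rw [lt_div_iff₀ hn0]
      linarith
    linarith
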